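/- Let α, σ² > 0 and P_S > 0 be fixed, and for a probability mass function p on a finite set X ⊂ ℝ with threshold t(p) defined by ∑_x α·max{0, t² − x²}·p(x) = P_S, the map p ↦ ∑_x (1/2)·log₂(1 + α·max{0, t(p)² − x²}/(σ² + αx²))·p(x) equals the value of the concave program max over P ≥ 0 of ∑_x (1/2)log₂(1 + P(x)/(σ² + αx²))p(x) subject to ∑_x P(x)p(x) ≤ P_S; in particular this map is a concave function of p. -/

import Mathlib

open Real Finset

private lemma myS_log2_pos : 0 < Real.log 2 := Real.log_pos one_lt_two

/-- Gradient (supporting-line) inequality for the water-filling solution. -/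
private lemma myS_grad_bound {N ν P : ℝ} (hN : 0 < N) (hν : 0 < ν) (hP : 0 ≤ P) :
    Real.logb 2 (1 + P / N) ≤ Real.logb 2 (1 + max 0 (ν - N) / N) +
      (P - max 0 (ν - N)) / (ν * Real.log 2) := by
  have hl2 := myS_log2_pos
  set Ps := max 0 (ν - N) with hPs
  have hPs0 : 0 ≤ Ps := le_max_left _ _
  have hNP : 0 < N + P := by linarith
  have hNPs : 0 < N + Ps := by linarith
  have h1 : 1 + P / N = (N + P) / N := by field_simp
  have h2 : 1 + Ps / N = (N + Ps) / N := by field_simp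
  rw [h1, h2, Real.logb, Real.logb, Real.log_div hNP.ne' hN.ne',
    Real.log_div hNPs.ne' hN.ne']
  -- key: log (N+P) - log (N+Ps) ≤ (P - Ps)/(N+Ps)
  have key : Real.log (N + P) - Real.log (N + Ps) ≤ (P - Ps) / (N + Ps) := by
    have h := Real.log_le_sub_one_of_pos (x := (N + P) / (N + Ps)) (by positivity)
    rw [Real.log_div hNP.ne' hNPs.ne'] at h
    have heq : (N + P) / (N + Ps) - 1 = (P - Ps) / (N + Ps) := by
      field_simp
      ring
    linarith [heq ▸ h]
  have hstep : (P - Ps) / (N + Ps) ≤ (P - Ps) / ν := by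
    rcases le_total ν N with h | h
    · have hPsz : Ps = 0 := max_eq_left (by linarith)
      rw [hPsz, sub_zero, add_zero]
      exact div_le_div_of_nonneg_left hP hν h
    · have hps : Ps = ν - N := max_eq_right (by linarith)
      have hNν : N + Ps = ν := by rw [hps]; ring
      rw [hNν]
  have hdiv : (Real.log (N + P) - Real.log (N + Ps)) / Real.log 2
      ≤ ((P - Ps) / ν) / Real.log 2 := by
    gcongr
    linarith
  rw [div_div] at hdiv
  have hsplit : (Real.log (N + P) - Real.log (N + Ps)) / Real.log 2
      = Real.log (N + P) / Real.log 2 - Real.log (N + Ps) / Real.log 2 := by ring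
  rw [hsplit] at hdiv
  have e1 : (Real.log (N + P) - Real.log N) / Real.log 2
      = Real.log (N + P) / Real.log 2 - Real.log N / Real.log 2 := by ring
  have e2 : (Real.log (N + Ps) - Real.log N) / Real.log 2
      = Real.log (N + Ps) / Real.log 2 - Real.log N / Real.log 2 := by ring
  rw [e1, e2]
  linarith

/-- Concavity (Jensen) for the rate function in the power. -/
private lemma myS_jensen {N a b w1 w2 : ℝ} (hN : 0 < N) (ha : 0 ≤ a) (hb : 0 ≤ b)
    (hw1 : 0 ≤ w1) (hw2 : 0 ≤ w2) (hw : w1 + w2 = 1) :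
    w1 * ((1 / 2) * Real.logb 2 (1 + a / N)) + w2 * ((1 / 2) * Real.logb 2 (1 + b / N))
      ≤ (1 / 2) * Real.logb 2 (1 + (w1 * a + w2 * b) / N) := by
  have hl2 := myS_log2_pos
  have hNa : 0 < N + a := by linarith
  have hNb : 0 < N + b := by linarith
  have hNc : 0 < N + (w1 * a + w2 * b) := by nlinarith
  have h1 : 1 + a / N = (N + a) / N := by field_simp
  have h2 : 1 + b / N = (N + b) / N := by field_simp
  have h3 : 1 + (w1 * a + w2 * b) / N = (N + (w1 * a + w2 * b)) / N := by field_simp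
  rw [h1, h2, h3, Real.logb, Real.logb, Real.logb,
    Real.log_div hNa.ne' hN.ne', Real.log_div hNb.ne' hN.ne',
    Real.log_div hNc.ne' hN.ne']
  have hconc := strictConcaveOn_log_Ioi.concaveOn.2 (Set.mem_Ioi.2 hNa)
    (Set.mem_Ioi.2 hNb) hw1 hw2 hw
  simp only [smul_eq_mul] at hconc
  have hpt : w1 * (N + a) + w2 * (N + b) = N + (w1 * a + w2 * b) := by
    nlinarith [hw]
  rw [hpt] at hconc
  have e : w1 * (1 / 2 * ((Real.log (N + a) - Real.log N) / Real.log 2))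
      + w2 * (1 / 2 * ((Real.log (N + b) - Real.log N) / Real.log 2))
      = (w1 * (Real.log (N + a) - Real.log N) + w2 * (Real.log (N + b) - Real.log N))
        / (2 * Real.log 2) := by
    field_simp
    try ring
  have e2 : 1 / 2 * ((Real.log (N + (w1 * a + w2 * b)) - Real.log N) / Real.log 2)
      = (Real.log (N + (w1 * a + w2 * b)) - Real.log N) / (2 * Real.log 2) := by ring
  rw [e, e2]
  have hC : w1 * Real.log N + w2 * Real.log N = Real.log N := by
    rw [← add_mul, hw, one_mul]
  have hnum : w1 * (Real.log (N + a) - Real.log N) + w2 * (Real.log (N + b) - Real.log N)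
      ≤ Real.log (N + (w1 * a + w2 * b)) - Real.log N := by nlinarith [hconc, hC]
  have h2L : (0:ℝ) < 2 * Real.log 2 := by linarith
  exact div_le_div_of_nonneg_right hnum h2L.le

private lemma myS_combo_le {A B : Set ℝ} {θ c : ℝ} (hA : A.Nonempty) (hB : B.Nonempty)
    (hθ0 : 0 ≤ θ) (hθ1 : θ ≤ 1)
    (h : ∀ a ∈ A, ∀ b ∈ B, θ * a + (1 - θ) * b ≤ c) :
    θ * sSup A + (1 - θ) * sSup B ≤ c := by
  obtain ⟨a0, ha0⟩ := hA
  obtain ⟨b0, hb0⟩ := hB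
  rcases eq_or_lt_of_le hθ0 with h0 | h0
  · subst h0
    have hsB : sSup B ≤ c := csSup_le ⟨b0, hb0⟩ fun b hb => by
      have := h a0 ha0 b hb; linarith
    linarith
  rcases eq_or_lt_of_le hθ1 with h1 | h1
  · subst h1
    have hsA : sSup A ≤ c := csSup_le ⟨a0, ha0⟩ fun a ha => by
      have := h a ha b0 hb0; linarith
    linarith
  have h1θ : 0 < 1 - θ := by linarith
  have hsA : sSup A ≤ (c - (1 - θ) * sSup B) / θ := by
    apply csSup_le ⟨a0, ha0⟩
    intro a ha
    rw [le_div_iff₀ h0]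
    have hsB : sSup B ≤ (c - θ * a) / (1 - θ) := by
      apply csSup_le ⟨b0, hb0⟩
      intro b hb
      rw [le_div_iff₀ h1θ]
      have := h a ha b hb; linarith
    rw [le_div_iff₀ h1θ] at hsB
    linarith
  rw [le_div_iff₀ h0] at hsA
  linarith

theorem optimized_rate_concave_in_p
    (X : Finset ℝ) (hX : X.Nonempty) (α σ2 PS : ℝ)
    (hα : 0 < α) (hσ : 0 < σ2) (hPS : 0 < PS) :
    let V : (ℝ → ℝ) → ℝ := fun p =>
      sSup {r : ℝ | ∃ Pw : ℝ → ℝ, (∀ x ∈ X, 0 ≤ Pw x) ∧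
        (∑ x ∈ X, Pw x * p x ≤ PS) ∧
        r = ∑ x ∈ X, (1 / 2) * Real.logb 2 (1 + Pw x / (σ2 + α * x ^ 2)) * p x}
    (∀ p : ℝ → ℝ, (∀ x ∈ X, 0 ≤ p x) → (∑ x ∈ X, p x = 1) →
      ∀ t : ℝ, 0 < t → (∑ x ∈ X, α * max 0 (t ^ 2 - x ^ 2) * p x = PS) →
        ∑ x ∈ X, (1 / 2) *
          Real.logb 2 (1 + α * max 0 (t ^ 2 - x ^ 2) / (σ2 + α * x ^ 2)) * p x
          = V p) ∧
    (∀ p q : ℝ → ℝ, (∀ x ∈ X, 0 ≤ p x) → (∑ x ∈ X, p x = 1) →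
      (∀ x ∈ X, 0 ≤ q x) → (∑ x ∈ X, q x = 1) →
      ∀ θ : ℝ, θ ∈ Set.Icc (0 : ℝ) 1 →
        θ * V p + (1 - θ) * V q ≤ V (fun x => θ * p x + (1 - θ) * q x)) := by
  intro V
  have hN : ∀ x : ℝ, 0 < σ2 + α * x ^ 2 := fun x => by nlinarith [sq_nonneg x]
  have hl2 := myS_log2_pos
  set S : (ℝ → ℝ) → Set ℝ := fun p =>
    {r : ℝ | ∃ Pw : ℝ → ℝ, (∀ x ∈ X, 0 ≤ Pw x) ∧
        (∑ x ∈ X, Pw x * p x ≤ PS) ∧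
        r = ∑ x ∈ X, (1 / 2) * Real.logb 2 (1 + Pw x / (σ2 + α * x ^ 2)) * p x}
    with hSdef
  have hVS : ∀ p, V p = sSup (S p) := fun p => rfl
  -- 0 is always a member
  have hmem0 : ∀ p : ℝ → ℝ, (0 : ℝ) ∈ S p := by
    intro p
    refine ⟨fun _ => 0, fun x _ => le_rfl, by simp [hPS.le], ?_⟩
    simp
  -- uniform upper bound
  have hub : ∀ p : ℝ → ℝ, (∀ x ∈ X, 0 ≤ p x) →
      ∀ r ∈ S p, r ≤ PS / (2 * σ2 * Real.log 2) := by
    intro p hp r hr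
    obtain ⟨Pw, hPw0, hPwP, rfl⟩ := hr
    have hterm : ∀ x ∈ X, (1 / 2) * Real.logb 2 (1 + Pw x / (σ2 + α * x ^ 2)) * p x
        ≤ Pw x * p x / (2 * σ2 * Real.log 2) := by
      intro x hx
      have hNx := hN x
      have hPwx := hPw0 x hx
      have hpx := hp x hx
      have hlog : Real.log (1 + Pw x / (σ2 + α * x ^ 2)) ≤ Pw x / (σ2 + α * x ^ 2) := by
        have := Real.log_le_sub_one_of_pos (x := 1 + Pw x / (σ2 + α * x ^ 2))
          (by positivity)
        linarith
      have h2 : Pw x / (σ2 + α * x ^ 2) ≤ Pw x / σ2 := by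
        apply div_le_div_of_nonneg_left hPwx hσ
        nlinarith [sq_nonneg x]
      have hlb : Real.logb 2 (1 + Pw x / (σ2 + α * x ^ 2)) ≤ Pw x / (σ2 * Real.log 2) := by
        rw [Real.logb, ← div_div]
        gcongr
        linarith
      have heq : Pw x * p x / (2 * σ2 * Real.log 2)
          = (Pw x / (σ2 * Real.log 2)) * p x / 2 := by
        ring
      rw [heq]
      have := mul_le_mul_of_nonneg_right hlb hpx
      linarith
    calc ∑ x ∈ X, (1 / 2) * Real.logb 2 (1 + Pw x / (σ2 + α * x ^ 2)) * p x
        ≤ ∑ x ∈ X, Pw x * p x / (2 * σ2 * Real.log 2) := Finset.sum_le_sum hterm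
      _ = (∑ x ∈ X, Pw x * p x) / (2 * σ2 * Real.log 2) := by rw [Finset.sum_div]
      _ ≤ PS / (2 * σ2 * Real.log 2) := by gcongr
  have hbdd : ∀ p : ℝ → ℝ, (∀ x ∈ X, 0 ≤ p x) → BddAbove (S p) := by
    intro p hp
    exact ⟨PS / (2 * σ2 * Real.log 2), fun r hr => hub p hp r hr⟩
  constructor
  · -- Part 1: water-filling achieves the supremum
    intro p hp hp1 t ht htPS
    rw [hVS]
    set ν : ℝ := σ2 + α * t ^ 2 with hν
    have hνpos : 0 < ν := hN t
    have hrw : ∀ x : ℝ, α * max 0 (t ^ 2 - x ^ 2) = max 0 (ν - (σ2 + α * x ^ 2)) := by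
      intro x
      rw [mul_max_of_nonneg _ _ hα.le, mul_zero]
      congr 1
      ring
    set Pst : ℝ → ℝ := fun x => α * max 0 (t ^ 2 - x ^ 2) with hPst
    have hPst0 : ∀ x ∈ X, 0 ≤ Pst x := fun x _ =>
      mul_nonneg hα.le (le_max_left _ _)
    have hWmem : (∑ x ∈ X, (1 / 2) *
        Real.logb 2 (1 + Pst x / (σ2 + α * x ^ 2)) * p x) ∈ S p :=
      ⟨Pst, hPst0, le_of_eq htPS, rfl⟩
    have hWub : ∀ r ∈ S p, r ≤ ∑ x ∈ X, (1 / 2) *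
        Real.logb 2 (1 + Pst x / (σ2 + α * x ^ 2)) * p x := by
      intro r hr
      obtain ⟨Pw, hPw0, hPwP, rfl⟩ := hr
      have hterm : ∀ x ∈ X,
          (1 / 2) * Real.logb 2 (1 + Pw x / (σ2 + α * x ^ 2)) * p x
          ≤ (1 / 2) * Real.logb 2 (1 + Pst x / (σ2 + α * x ^ 2)) * p x
            + (Pw x * p x - Pst x * p x) / (2 * ν * Real.log 2) := by
        intro x hx
        have hgr := myS_grad_bound (N := σ2 + α * x ^ 2) (ν := ν)
          (P := Pw x) (hN x) hνpos (hPw0 x hx)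
        rw [← hrw x] at hgr
        have hpx := hp x hx
        have := mul_le_mul_of_nonneg_right hgr hpx
        have heq : ((Pw x - Pst x) / (ν * Real.log 2)) * p x / 2
            = (Pw x * p x - Pst x * p x) / (2 * ν * Real.log 2) := by
          field_simp
        nlinarith [this]
      have hsum := Finset.sum_le_sum hterm
      rw [Finset.sum_add_distrib] at hsum
      have hsum2 : ∑ x ∈ X, (Pw x * p x - Pst x * p x) / (2 * ν * Real.log 2)
          = ((∑ x ∈ X, Pw x * p x) - ∑ x ∈ X, Pst x * p x) / (2 * ν * Real.log 2) := by
        rw [← Finset.sum_div, Finset.sum_sub_distrib]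
      rw [hsum2, htPS] at hsum
      have hle : ((∑ x ∈ X, Pw x * p x) - PS) / (2 * ν * Real.log 2) ≤ 0 := by
        apply div_nonpos_of_nonpos_of_nonneg
        · linarith
        · positivity
      linarith
    exact le_antisymm (le_csSup (hbdd p hp) hWmem) (csSup_le ⟨_, hWmem⟩ hWub)
  · -- Part 2: concavity in p
    intro p q hp hp1 hq hq1 θ hθ
    obtain ⟨hθ0, hθ1⟩ := hθ
    rw [hVS, hVS, hVS]
    set m : ℝ → ℝ := fun x => θ * p x + (1 - θ) * q x with hm
    have hm0 : ∀ x ∈ X, 0 ≤ m x := fun x hx =>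
      add_nonneg (mul_nonneg hθ0 (hp x hx)) (mul_nonneg (by linarith) (hq x hx))
    apply myS_combo_le ⟨0, hmem0 p⟩ ⟨0, hmem0 q⟩ hθ0 hθ1
    intro a ha b hb
    obtain ⟨Pp, hPp0, hPpP, rfl⟩ := ha
    obtain ⟨Pq, hPq0, hPqP, rfl⟩ := hb
    set Pw : ℝ → ℝ := fun x => if m x = 0 then 0 else
      (θ * p x * Pp x + (1 - θ) * q x * Pq x) / m x with hPwdef
    have hzero : ∀ x ∈ X, m x = 0 → θ * p x = 0 ∧ (1 - θ) * q x = 0 := by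
      intro x hx h0
      have h0' : θ * p x + (1 - θ) * q x = 0 := h0
      have h1 : 0 ≤ θ * p x := mul_nonneg hθ0 (hp x hx)
      have h2 : 0 ≤ (1 - θ) * q x := mul_nonneg (by linarith) (hq x hx)
      constructor <;> linarith
    have hPw0 : ∀ x ∈ X, 0 ≤ Pw x := by
      intro x hx
      simp only [hPwdef]
      split
      · exact le_rfl
      · apply div_nonneg
        · have := mul_nonneg (mul_nonneg hθ0 (hp x hx)) (hPp0 x hx)
          have := mul_nonneg (mul_nonneg (by linarith : (0:ℝ) ≤ 1 - θ) (hq x hx))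
            (hPq0 x hx)
          linarith
        · exact hm0 x hx
    have hPwm : ∀ x ∈ X, Pw x * m x = θ * p x * Pp x + (1 - θ) * q x * Pq x := by
      intro x hx
      simp only [hPwdef]
      split_ifs with h0
      · obtain ⟨e1, e2⟩ := hzero x hx h0
        linear_combination (-(Pp x)) * e1 + (-(Pq x)) * e2
      · exact div_mul_cancel₀ _ h0
    have hPwP : ∑ x ∈ X, Pw x * m x ≤ PS := by
      have : ∑ x ∈ X, Pw x * m x
          = θ * (∑ x ∈ X, Pp x * p x) + (1 - θ) * (∑ x ∈ X, Pq x * q x) := by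
        rw [Finset.mul_sum, Finset.mul_sum, ← Finset.sum_add_distrib]
        apply Finset.sum_congr rfl
        intro x hx
        rw [hPwm x hx]; ring
      rw [this]
      nlinarith [hPpP, hPqP]
    have hmemm : (∑ x ∈ X, (1 / 2) *
        Real.logb 2 (1 + Pw x / (σ2 + α * x ^ 2)) * m x) ∈ S m :=
      ⟨Pw, hPw0, hPwP, rfl⟩
    have hterm : ∀ x ∈ X,
        θ * ((1 / 2) * Real.logb 2 (1 + Pp x / (σ2 + α * x ^ 2)) * p x)
        + (1 - θ) * ((1 / 2) * Real.logb 2 (1 + Pq x / (σ2 + α * x ^ 2)) * q x)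
        ≤ (1 / 2) * Real.logb 2 (1 + Pw x / (σ2 + α * x ^ 2)) * m x := by
      intro x hx
      rcases eq_or_ne (m x) 0 with h0 | h0
      · obtain ⟨e1, e2⟩ := hzero x hx h0
        have l1 : θ * ((1 / 2) * Real.logb 2 (1 + Pp x / (σ2 + α * x ^ 2)) * p x)
            = (1 / 2) * Real.logb 2 (1 + Pp x / (σ2 + α * x ^ 2)) * (θ * p x) := by ring
        have l2 : (1 - θ) * ((1 / 2) * Real.logb 2 (1 + Pq x / (σ2 + α * x ^ 2)) * q x)
            = (1 / 2) * Real.logb 2 (1 + Pq x / (σ2 + α * x ^ 2)) * ((1 - θ) * q x) := by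
          ring
        rw [l1, l2, e1, e2, h0]
        simp
      · have hmx : 0 < m x := lt_of_le_of_ne (hm0 x hx) (Ne.symm h0)
        have hjen := myS_jensen (N := σ2 + α * x ^ 2) (a := Pp x) (b := Pq x)
          (w1 := θ * p x / m x) (w2 := (1 - θ) * q x / m x) (hN x)
          (hPp0 x hx) (hPq0 x hx)
          (div_nonneg (mul_nonneg hθ0 (hp x hx)) hmx.le)
          (div_nonneg (mul_nonneg (by linarith) (hq x hx)) hmx.le)
          (by field_simp; rfl)
        have harg : θ * p x / m x * Pp x + (1 - θ) * q x / m x * Pq x = Pw x := by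
          simp only [hPwdef]
          rw [if_neg h0]
          field_simp
          try ring
        rw [harg] at hjen
        have := mul_le_mul_of_nonneg_right hjen hmx.le
        have hml : (θ * p x / m x * ((1 / 2) * Real.logb 2 (1 + Pp x / (σ2 + α * x ^ 2)))
            + (1 - θ) * q x / m x * ((1 / 2) * Real.logb 2 (1 + Pq x / (σ2 + α * x ^ 2))))
            * m x
            = θ * ((1 / 2) * Real.logb 2 (1 + Pp x / (σ2 + α * x ^ 2)) * p x)
            + (1 - θ) * ((1 / 2) * Real.logb 2 (1 + Pq x / (σ2 + α * x ^ 2)) * q x) := by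
          field_simp
          try ring
        rw [hml] at this
        linarith [this]
    have hsum := Finset.sum_le_sum hterm
    rw [Finset.sum_add_distrib, ← Finset.mul_sum, ← Finset.mul_sum] at hsum
    calc θ * (∑ x ∈ X, (1 / 2) * Real.logb 2 (1 + Pp x / (σ2 + α * x ^ 2)) * p x)
        + (1 - θ) * (∑ x ∈ X, (1 / 2) * Real.logb 2 (1 + Pq x / (σ2 + α * x ^ 2)) * q x)
        ≤ ∑ x ∈ X, (1 / 2) * Real.logb 2 (1 + Pw x / (σ2 + α * x ^ 2)) * m x := hsum
      _ ≤ sSup (S m) := le_csSup (hbdd m hm0) hmemm
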